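/- If Nβλ - dμ < 0 with all parameters positive and τ ≥ 0, then no purely imaginary number ζ = iω with ω > 0 satisfies ζ² + (μ + a)ζ + aμ(1 - (Nβλ/(dμ)) e^{-ζτ}) = 0. -/
import Mathlib


theorem no_pure_imaginary_root (a mu d beta lam N tau : ℝ)
    (ha : 0 < a) (hmu : 0 < mu) (hd : 0 < d) (hbeta : 0 < beta)
    (hlam : 0 < lam) (hN : 0 < N) (htau : 0 ≤ tau)
    (hneg : N * beta * lam - d * mu < 0) :
    ¬ ∃ omega : ℝ, 0 < omega ∧
      (Complex.I * ↑omega) ^ 2 + (↑(mu + a) : ℂ) * (Complex.I * ↑omega) +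
        (↑(a * mu) : ℂ) * (1 - (↑(N * beta * lam / (d * mu)) : ℂ) *
          Complex.exp (-(Complex.I * ↑omega) * ↑tau)) = 0 := by
  rintro ⟨ω, hω, heq⟩
  set R : ℝ := N * beta * lam / (d * mu) with hRdef
  have hR0 : 0 < R := by positivity
  have hR1 : R < 1 := by
    rw [hRdef, div_lt_one (by positivity)]
    linarith
  have key : (↑(a * mu * R) : ℂ) * Complex.exp (-(Complex.I * ↑ω) * ↑tau)
      = (Complex.I * ↑ω) ^ 2 + (↑(mu + a) : ℂ) * (Complex.I * ↑ω) + ↑(a * mu) := by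
    push_cast at heq ⊢
    linear_combination -heq
  have habs := congrArg Complex.normSq key
  have hexp : Complex.normSq (Complex.exp (-(Complex.I * ↑ω) * ↑tau)) = 1 := by
    rw [Complex.normSq_eq_norm_sq, Complex.norm_exp]
    simp
  rw [Complex.normSq_mul, hexp, mul_one, Complex.normSq_ofReal] at habs
  simp [Complex.normSq_apply, Complex.mul_re, Complex.mul_im, Complex.add_re,
    Complex.add_im, pow_two] at habs
  nlinarith [mul_pos hω hω, mul_pos (mul_pos ha hmu) (mul_pos ha hmu),
    mul_pos (mul_pos (mul_pos ha hmu) (mul_pos ha hmu))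
      (mul_pos (by linarith : (0:ℝ) < 1 - R) (by linarith : (0:ℝ) < 1 + R)),
    mul_pos (mul_pos hω hω) (mul_pos hω hω),
    mul_pos (mul_pos ha ha) (mul_pos hω hω),
    mul_pos (mul_pos hmu hmu) (mul_pos hω hω)]
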